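/- arXiv:0704.2458 — 3 statements merged into one kernel-verified Lean document; each statement's English description precedes it below -/
import Mathlib

section
/- If F : P₂(H) → [0,+∞] is strongly displacement convex, μ̄ ∈ P₂(H), and μ_τ minimizes μ ↦ F(μ) + (1/2τ)W₂²(μ, μ̄), then for every ν with F(ν) < ∞ one has W₂²(μ_τ, ν) − W₂²(μ̄, ν) + W₂²(μ_τ, μ̄) ≤ 2τ (F(ν) − F(μ_τ)). -/
open MeasureTheory ENNReal Filter Topology Pointwise
open scoped Classical

noncomputable section

variable {H : Type*} [NormedAddCommGroup H] [InnerProductSpace ℝ H]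
  [CompleteSpace H] [SecondCountableTopology H] [MeasurableSpace H] [BorelSpace H]

/-- A coupling of `μ` and `ν`: a measure on `H × H` with marginals `μ` and `ν`. -/
def IsCoupling (P : Measure (H × H)) (μ ν : Measure H) : Prop :=
  P.map Prod.fst = μ ∧ P.map Prod.snd = ν

/-- Squared 2-Wasserstein distance, as an infimum of quadratic transport costs. -/
noncomputable def W2sq (μ ν : Measure H) : ℝ≥0∞ :=
  ⨅ (P : Measure (H × H)) (_ : IsCoupling P μ ν),
    ∫⁻ p, ENNReal.ofReal (‖p.1 - p.2‖ ^ 2) ∂P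

/-- Finite second moment. -/
def HasFiniteSecondMoment (μ : Measure H) : Prop :=
  ∫⁻ x, ENNReal.ofReal (‖x‖ ^ 2) ∂μ < ⊤

/-- Membership in the Wasserstein space `P₂(H)`. -/
def MemP2 (μ : Measure H) : Prop :=
  IsProbabilityMeasure μ ∧ HasFiniteSecondMoment μ

/-- Weak convergence of measures, in duality with bounded continuous functions. -/
def WeakConv (μs : ℕ → Measure H) (μ : Measure H) : Prop :=
  ∀ f : BoundedContinuousFunction H ℝ,
    Tendsto (fun n => ∫ x, f x ∂(μs n)) atTop (𝓝 (∫ x, f x ∂μ))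

/-- Relative entropy `H(μ|γ) = ∫ ρ log ρ dγ` if `μ = ργ`, `+∞` otherwise (for probability
measures the integrand satisfies `ρ log ρ + e⁻¹ ≥ 0`, so we compute via `lintegral`). -/
noncomputable def relEnt (μ γ : Measure H) : ℝ≥0∞ :=
  if μ ≪ γ then
    (∫⁻ x, ENNReal.ofReal ((μ.rnDeriv γ x).toReal * Real.log (μ.rnDeriv γ x).toReal
        + Real.exp (-1)) ∂γ) - ENNReal.ofReal (Real.exp (-1))
  else ⊤

/-- Strong displacement convexity of a functional on `P₂(H)`: for every base point `μbar`
and endpoints `ν₀, ν₁` there is a connecting curve, continuous in the Wasserstein distance,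
along which `W₂²(·, μbar)` is convex with modulus `t(1−t)W₂²(ν₀,ν₁)` and `F` is convex. -/
def StronglyDisplacementConvex (F : Measure H → ℝ≥0∞) : Prop :=
  ∀ μbar ν₀ ν₁ : Measure H, MemP2 μbar → MemP2 ν₀ → MemP2 ν₁ →
    ∃ ν : ℝ → Measure H,
      (∀ t ∈ Set.Icc (0:ℝ) 1, MemP2 (ν t)) ∧ ν 0 = ν₀ ∧ ν 1 = ν₁ ∧
      (∀ t₀ ∈ Set.Icc (0:ℝ) 1,
        Tendsto (fun t => W2sq (ν t) (ν t₀)) (𝓝[Set.Icc (0:ℝ) 1] t₀) (𝓝 0)) ∧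
      (∀ t ∈ Set.Icc (0:ℝ) 1,
        W2sq (ν t) μbar + ENNReal.ofReal (t * (1 - t)) * W2sq ν₀ ν₁ ≤
          ENNReal.ofReal (1 - t) * W2sq ν₀ μbar + ENNReal.ofReal t * W2sq ν₁ μbar) ∧
      (∀ t ∈ Set.Icc (0:ℝ) 1,
        F (ν t) ≤ ENNReal.ofReal (1 - t) * F ν₀ + ENNReal.ofReal t * F ν₁)

set_option linter.unusedSectionVars false
lemma W2sq_le_coupling {μ ν : Measure H} {P : Measure (H × H)} (hP : IsCoupling P μ ν) :
    W2sq μ ν ≤ ∫⁻ p, ENNReal.ofReal (‖p.1 - p.2‖ ^ 2) ∂P :=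
  iInf₂_le P hP

lemma W2sq_symm_le (μ ν : Measure H) : W2sq μ ν ≤ W2sq ν μ := by
  apply le_iInf₂
  intro P hP
  have hswap : IsCoupling (P.map Prod.swap) μ ν := by
    constructor
    · rw [Measure.map_map measurable_fst measurable_swap]
      exact hP.2
    · rw [Measure.map_map measurable_snd measurable_swap]
      exact hP.1
  have hmeas : Measurable fun p : H × H => ENNReal.ofReal (‖p.1 - p.2‖ ^ 2) :=
    (measurable_fst.sub measurable_snd).norm.pow_const 2 |>.ennreal_ofReal
  calc W2sq μ ν ≤ ∫⁻ p, ENNReal.ofReal (‖p.1 - p.2‖ ^ 2) ∂(P.map Prod.swap) :=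
        W2sq_le_coupling hswap
    _ = ∫⁻ p, ENNReal.ofReal (‖p.2 - p.1‖ ^ 2) ∂P := by
        rw [lintegral_map hmeas measurable_swap]; rfl
    _ = ∫⁻ p, ENNReal.ofReal (‖p.1 - p.2‖ ^ 2) ∂P := by
        simp_rw [norm_sub_rev]

lemma W2sq_symm (μ ν : Measure H) : W2sq μ ν = W2sq ν μ :=
  le_antisymm (W2sq_symm_le μ ν) (W2sq_symm_le ν μ)

lemma W2sq_lt_top {μ ν : Measure H} (hμ : MemP2 μ) (hν : MemP2 ν) : W2sq μ ν < ⊤ := by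
  haveI := hμ.1
  haveI := hν.1
  have hcoup : IsCoupling (μ.prod ν) μ ν := by
    constructor
    · simp
    · simp
  have hb : ∀ p : H × H, ENNReal.ofReal (‖p.1 - p.2‖ ^ 2) ≤
      ENNReal.ofReal (2 * ‖p.1‖ ^ 2) + ENNReal.ofReal (2 * ‖p.2‖ ^ 2) := by
    intro p
    rw [← ENNReal.ofReal_add (by positivity) (by positivity)]
    apply ENNReal.ofReal_le_ofReal
    have := norm_sub_le p.1 p.2
    nlinarith [this, norm_nonneg (p.1 - p.2), sq_nonneg (‖p.1‖ - ‖p.2‖), mul_le_mul this this (norm_nonneg _) (by positivity : (0:ℝ) ≤ ‖p.1‖ + ‖p.2‖)]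
  have h1 : Measurable fun x : H => ENNReal.ofReal (2 * ‖x‖ ^ 2) :=
    ((measurable_norm.pow_const 2).const_mul 2).ennreal_ofReal
  calc W2sq μ ν ≤ ∫⁻ p, ENNReal.ofReal (‖p.1 - p.2‖ ^ 2) ∂(μ.prod ν) := W2sq_le_coupling hcoup
    _ ≤ ∫⁻ p, (ENNReal.ofReal (2 * ‖p.1‖ ^ 2) + ENNReal.ofReal (2 * ‖p.2‖ ^ 2)) ∂(μ.prod ν) :=
        lintegral_mono hb
    _ = (∫⁻ p : H × H, ENNReal.ofReal (2 * ‖p.1‖ ^ 2) ∂(μ.prod ν)) +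
        ∫⁻ p : H × H, ENNReal.ofReal (2 * ‖p.2‖ ^ 2) ∂(μ.prod ν) :=
        lintegral_add_left (h1.comp measurable_fst) _
    _ = (∫⁻ x, ENNReal.ofReal (2 * ‖x‖ ^ 2) ∂μ) + ∫⁻ x, ENNReal.ofReal (2 * ‖x‖ ^ 2) ∂ν := by
        rw [← lintegral_map h1 measurable_fst, ← lintegral_map h1 measurable_snd,
          hcoup.1, hcoup.2]
    _ < ⊤ := by
        have hμ2 := hμ.2
        have hν2 := hν.2
        simp_rw [fun x : H => ENNReal.ofReal_mul (p := 2) (q := ‖x‖^2) (by norm_num),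
          lintegral_const_mul _ ((measurable_norm.pow_const 2).ennreal_ofReal)]
        refine ENNReal.add_lt_top.mpr ⟨?_, ?_⟩
        · exact ENNReal.mul_lt_top ENNReal.ofReal_lt_top hμ2
        · exact ENNReal.mul_lt_top ENNReal.ofReal_lt_top hν2


/-- Discrete variational inequality for one step of the JKO scheme: if `μτ` minimizes
`μ ↦ F(μ) + W₂²(μ, μbar)/(2τ)` then
`W₂²(μτ,ν) − W₂²(μbar,ν) + W₂²(μτ,μbar) ≤ 2τ(F(ν) − F(μτ))` for every `ν ∈ D(F)`
(stated here in the equivalent rearranged form avoiding `ℝ≥0∞` subtraction). -/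
theorem jko_step_variational_inequality (F : Measure H → ℝ≥0∞)
    (hF : StronglyDisplacementConvex F) (τ : ℝ) (hτ : 0 < τ)
    (μbar μτ : Measure H) (hμbar : MemP2 μbar) (hμτ : MemP2 μτ)
    (hmin : ∀ σ : Measure H, MemP2 σ →
      F μτ + (ENNReal.ofReal (2 * τ))⁻¹ * W2sq μτ μbar ≤
        F σ + (ENNReal.ofReal (2 * τ))⁻¹ * W2sq σ μbar) :
    ∀ ν : Measure H, MemP2 ν → F ν < ⊤ →
      W2sq μτ ν + W2sq μτ μbar + ENNReal.ofReal (2 * τ) * F μτ ≤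
        W2sq μbar ν + ENNReal.ofReal (2 * τ) * F ν := by
  intro ν hν hFν
  obtain ⟨νc, hP2, h0, h1, _, hWconv, hFconv⟩ := hF μbar μτ ν hμbar hμτ hν
  set c : ℝ≥0∞ := (ENNReal.ofReal (2 * τ))⁻¹ with hc
  have h2τ : (0:ℝ) < 2 * τ := by linarith
  have hc_ne_top : c ≠ ⊤ := by
    simp only [hc, Ne, ENNReal.inv_eq_top]
    exact (ENNReal.ofReal_pos.mpr h2τ).ne'
  have hc_toReal : c.toReal = (2 * τ)⁻¹ := by
    rw [hc, ENNReal.toReal_inv, ENNReal.toReal_ofReal h2τ.le]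
  have hB : W2sq μτ μbar ≠ ⊤ := (W2sq_lt_top hμτ hμbar).ne
  have hD : W2sq μτ ν ≠ ⊤ := (W2sq_lt_top hμτ hν).ne
  have hG : W2sq ν μbar ≠ ⊤ := (W2sq_lt_top hν hμbar).ne
  have hA : F μτ ≠ ⊤ := by
    refine ne_top_of_le_ne_top ?_ (le_trans le_self_add (hmin ν hν))
    exact ENNReal.add_ne_top.mpr ⟨hFν.ne, ENNReal.mul_ne_top hc_ne_top hG⟩
  set a := (F μτ).toReal
  set e := (F ν).toReal
  set b := (W2sq μτ μbar).toReal
  set d := (W2sq μτ ν).toReal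
  set g := (W2sq ν μbar).toReal
  set r := (2 * τ)⁻¹ with hr
  have hr0 : (0:ℝ) ≤ r := by positivity
  have hd0 : (0:ℝ) ≤ d := ENNReal.toReal_nonneg
  have hkey : ∀ t : ℝ, 0 < t → t ≤ 1 → a + r * b + r * (1 - t) * d ≤ e + r * g := by
    intro t ht0 ht1
    have ht : t ∈ Set.Icc (0:ℝ) 1 := ⟨ht0.le, ht1⟩
    set wt := W2sq (νc t) μbar with hwt
    set ft := F (νc t) with hft
    have hwt_ne : wt ≠ ⊤ := (W2sq_lt_top (hP2 t ht) hμbar).ne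
    have hft_ne : ft ≠ ⊤ := by
      refine ne_top_of_le_ne_top ?_ (hFconv t ht)
      exact ENNReal.add_ne_top.mpr ⟨ENNReal.mul_ne_top ENNReal.ofReal_ne_top hA,
        ENNReal.mul_ne_top ENNReal.ofReal_ne_top hFν.ne⟩
    have e1 : a + c.toReal * b ≤ ft.toReal + c.toReal * wt.toReal := by
      have h := ENNReal.toReal_mono
        (ENNReal.add_ne_top.mpr ⟨hft_ne, ENNReal.mul_ne_top hc_ne_top hwt_ne⟩)
        (hmin (νc t) (hP2 t ht))
      rwa [ENNReal.toReal_add hA (ENNReal.mul_ne_top hc_ne_top hB), ENNReal.toReal_mul,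
        ENNReal.toReal_add hft_ne (ENNReal.mul_ne_top hc_ne_top hwt_ne),
        ENNReal.toReal_mul] at h
    have e2 : wt.toReal + (t * (1 - t)) * d ≤ (1 - t) * b + t * g := by
      have h := ENNReal.toReal_mono
        (ENNReal.add_ne_top.mpr ⟨ENNReal.mul_ne_top ENNReal.ofReal_ne_top hB,
          ENNReal.mul_ne_top ENNReal.ofReal_ne_top hG⟩) (hWconv t ht)
      rw [ENNReal.toReal_add hwt_ne (ENNReal.mul_ne_top ENNReal.ofReal_ne_top hD),
        ENNReal.toReal_add (ENNReal.mul_ne_top ENNReal.ofReal_ne_top hB)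
          (ENNReal.mul_ne_top ENNReal.ofReal_ne_top hG)] at h
      simp only [ENNReal.toReal_mul] at h
      rwa [ENNReal.toReal_ofReal (by nlinarith : (0:ℝ) ≤ t * (1 - t)),
        ENNReal.toReal_ofReal (by linarith : (0:ℝ) ≤ 1 - t),
        ENNReal.toReal_ofReal ht0.le] at h
    have e3 : ft.toReal ≤ (1 - t) * a + t * e := by
      have h := ENNReal.toReal_mono
        (ENNReal.add_ne_top.mpr ⟨ENNReal.mul_ne_top ENNReal.ofReal_ne_top hA,
          ENNReal.mul_ne_top ENNReal.ofReal_ne_top hFν.ne⟩) (hFconv t ht)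
      rwa [ENNReal.toReal_add (ENNReal.mul_ne_top ENNReal.ofReal_ne_top hA)
          (ENNReal.mul_ne_top ENNReal.ofReal_ne_top hFν.ne),
        ENNReal.toReal_mul, ENNReal.toReal_mul,
        ENNReal.toReal_ofReal (by linarith : (0:ℝ) ≤ 1 - t),
        ENNReal.toReal_ofReal ht0.le] at h
    rw [hc_toReal] at e1
    have hstep : t * (a + r * b + r * (1 - t) * d) ≤ t * (e + r * g) := by
      nlinarith [e1, e3, mul_le_mul_of_nonneg_left e2 hr0]
    exact le_of_mul_le_mul_left hstep ht0
  have hfinal : a + r * b + r * d ≤ e + r * g := by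
    refine le_of_forall_pos_le_add ?_
    intro ε hε
    set t : ℝ := min 1 (ε / (r * d + 1)) with htdef
    have hrd1 : (0:ℝ) < r * d + 1 := by positivity
    have ht0 : 0 < t := lt_min one_pos (div_pos hε hrd1)
    have ht1 : t ≤ 1 := min_le_left _ _
    have htε : t * (r * d) ≤ ε := by
      have h1 : t ≤ ε / (r * d + 1) := min_le_right _ _
      have h2 : t * (r * d) ≤ (ε / (r * d + 1)) * (r * d) :=
        mul_le_mul_of_nonneg_right h1 (by positivity)
      calc t * (r * d) ≤ (ε / (r * d + 1)) * (r * d) := h2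
        _ ≤ ε := by
          rw [div_mul_eq_mul_div, div_le_iff₀ hrd1]
          nlinarith [mul_nonneg hr0 hd0]
    have := hkey t ht0 ht1
    nlinarith [this, htε]
  -- back to ℝ≥0∞
  rw [W2sq_symm μbar ν]
  have hLne : W2sq μτ ν + W2sq μτ μbar + ENNReal.ofReal (2 * τ) * F μτ ≠ ⊤ :=
    ENNReal.add_ne_top.mpr ⟨ENNReal.add_ne_top.mpr ⟨hD, hB⟩,
      ENNReal.mul_ne_top ENNReal.ofReal_ne_top hA⟩
  have hRne : W2sq ν μbar + ENNReal.ofReal (2 * τ) * F ν ≠ ⊤ :=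
    ENNReal.add_ne_top.mpr ⟨hG, ENNReal.mul_ne_top ENNReal.ofReal_ne_top hFν.ne⟩
  refine (ENNReal.toReal_le_toReal hLne hRne).mp ?_
  rw [ENNReal.toReal_add (ENNReal.add_ne_top.mpr ⟨hD, hB⟩)
      (ENNReal.mul_ne_top ENNReal.ofReal_ne_top hA),
    ENNReal.toReal_add hD hB,
    ENNReal.toReal_add hG (ENNReal.mul_ne_top ENNReal.ofReal_ne_top hFν.ne),
    ENNReal.toReal_mul, ENNReal.toReal_mul, ENNReal.toReal_ofReal h2τ.le]
  have hmul : (2 * τ) * (a + r * b + r * d) ≤ (2 * τ) * (e + r * g) :=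
    mul_le_mul_of_nonneg_left hfinal h2τ.le
  have hb' : 2 * τ * r * b = b := by rw [hr]; field_simp
  have hd' : 2 * τ * r * d = d := by rw [hr]; field_simp
  have hg' : 2 * τ * r * g = g := by rw [hr]; field_simp
  show d + b + 2 * τ * a ≤ g + 2 * τ * e
  nlinarith [hmul, hb', hd', hg']
end
end

section
/- Variable-function Fatou lemma for weak convergence: if μₙ → μ weakly in P(H) and fₙ : H → ℝ are uniformly bounded from below and equi-continuous, then liminfₙ ∫ fₙ dμₙ ≥ ∫ (liminfₙ fₙ) dμ. -/
open MeasureTheory ENNReal Filter Topology Pointwise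
open scoped Uniformity
open scoped Classical

noncomputable section

variable {H : Type*} [NormedAddCommGroup H] [InnerProductSpace ℝ H]
  [CompleteSpace H] [SecondCountableTopology H] [MeasurableSpace H] [BorelSpace H]

/-- Variable-function Fatou lemma for weak convergence: if `μₙ → μ` weakly and the `fₙ`
are uniformly bounded below by `C` and equi-continuous, then
`liminfₙ ∫ fₙ dμₙ ≥ ∫ liminfₙ fₙ dμ`. Since the measures are probability measures, this
is stated equivalently after subtracting the constant lower bound `C`, with `ℝ≥0∞`-valued
integrals (so that both sides are well defined even when infinite). -/
theorem fatou_variable_functions (μs : ℕ → Measure H) (μ : Measure H)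
    (hμs : ∀ n, IsProbabilityMeasure (μs n)) (hμ : IsProbabilityMeasure μ)
    (hw : WeakConv μs μ) (f : ℕ → H → ℝ) (C : ℝ)
    (hbd : ∀ n x, C ≤ f n x) (hec : Equicontinuous f) :
    ∫⁻ x, liminf (fun n => ENNReal.ofReal (f n x - C)) atTop ∂μ ≤
      liminf (fun n => ∫⁻ x, ENNReal.ofReal (f n x - C) ∂(μs n)) atTop := by
  -- the shifted functions are nonnegative
  set F : ℕ → H → ℝ := fun n x => f n x - C with hF
  have hFnn : ∀ n x, 0 ≤ F n x := fun n x => sub_nonneg.mpr (hbd n x)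
  -- the running infima
  set g : ℕ → H → ℝ := fun k x => ⨅ n : ℕ, F (n + k) x with hg
  have hbddF : ∀ k x, BddBelow (Set.range fun n : ℕ => F (n + k) x) :=
    fun k x => ⟨0, by rintro y ⟨n, rfl⟩; exact hFnn _ x⟩
  have hgnn : ∀ k x, 0 ≤ g k x := fun k x => le_ciInf fun n => hFnn _ x
  have hgle : ∀ k n x, k ≤ n → g k x ≤ F n x := by
    intro k n x hkn
    have : g k x ≤ F ((n - k) + k) x := ciInf_le (hbddF k x) (n - k)
    rwa [Nat.sub_add_cancel hkn] at this
  have hgmono : ∀ x, Monotone fun k => g k x := by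
    intro x k l hkl
    refine le_ciInf fun n => ?_
    have : g k x ≤ F ((n + l - k) + k) x := ciInf_le (hbddF k x) (n + l - k)
    rwa [Nat.sub_add_cancel (hkl.trans (Nat.le_add_left l n))] at this
  -- continuity of the running infima, from equicontinuity
  have hgcont : ∀ k, Continuous (g k) := by
    intro k
    rw [Metric.continuous_iff]
    intro x ε hε
    have hx := hec x
    have hU : {p : ℝ × ℝ | dist p.1 p.2 < ε / 2} ∈ 𝓤 ℝ := Metric.dist_mem_uniformity (by linarith)
    have := hx _ hU
    rw [Metric.eventually_nhds_iff] at this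
    obtain ⟨δ, hδ, hδ'⟩ := this
    refine ⟨δ, hδ, fun y hy => ?_⟩
    have key : ∀ n, dist (f n x) (f n y) < ε / 2 := hδ' hy
    have h1 : g k y ≤ g k x + ε / 2 := by
      rw [show g k x + ε / 2 = ⨅ n : ℕ, (F (n + k) x + ε / 2) by
        rw [hg]; exact (Monotone.map_ciInf_of_continuousAt
          (continuousAt_id.add continuousAt_const)
          (fun a b hab => by dsimp; linarith) (hbddF k x)) ]
      refine le_ciInf fun n => ?_
      have h2 : f (n + k) y - f (n + k) x < ε / 2 := by
        have := key (n + k); rw [Real.dist_eq, abs_sub_lt_iff] at this; linarith [this.2]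
      calc g k y ≤ F (n + k) y := ciInf_le (hbddF k y) n
        _ ≤ F (n + k) x + ε / 2 := by simp only [hF]; linarith
    have h2 : g k x ≤ g k y + ε / 2 := by
      rw [show g k y + ε / 2 = ⨅ n : ℕ, (F (n + k) y + ε / 2) by
        rw [hg]; exact (Monotone.map_ciInf_of_continuousAt
          (continuousAt_id.add continuousAt_const)
          (fun a b hab => by dsimp; linarith) (hbddF k y)) ]
      refine le_ciInf fun n => ?_
      have h2 : f (n + k) x - f (n + k) y < ε / 2 := by
        have := key (n + k); rw [Real.dist_eq, abs_sub_lt_iff] at this; linarith [this.1]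
      calc g k x ≤ F (n + k) x := ciInf_le (hbddF k x) n
        _ ≤ F (n + k) y + ε / 2 := by simp only [hF]; linarith
    rw [Real.dist_eq, abs_sub_lt_iff]
    constructor <;> linarith
  -- the open-sets liminf condition, from weak convergence (portmanteau)
  have h_opens : ∀ G : Set H, IsOpen G → μ G ≤ atTop.liminf fun i => μs i G := by
    intro G hG
    let P : ℕ → ProbabilityMeasure H := fun n => ⟨μs n, hμs n⟩
    let Q : ProbabilityMeasure H := ⟨μ, hμ⟩
    have hten : Tendsto P atTop (𝓝 Q) := by
      rw [ProbabilityMeasure.tendsto_iff_forall_integral_tendsto]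
      exact fun φ => hw φ
    exact ProbabilityMeasure.le_liminf_measure_open_of_tendsto hten hG
  -- key inequality for each k, via the portmanteau liminf inequality for lsc functions
  have hkey : ∀ k, ∫⁻ x, ENNReal.ofReal (g k x) ∂μ ≤
      atTop.liminf fun n => ∫⁻ x, ENNReal.ofReal (F n x) ∂(μs n) := by
    intro k
    have h1 : ∫⁻ x, ENNReal.ofReal (g k x) ∂μ ≤
        atTop.liminf fun n => ∫⁻ x, ENNReal.ofReal (g k x) ∂(μs n) :=
      lintegral_le_liminf_lintegral_of_forall_isOpen_measure_le_liminf_measure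
        (hgcont k) (fun x => hgnn k x) h_opens
    refine h1.trans (liminf_le_liminf ?_)
    filter_upwards [eventually_ge_atTop k] with n hn
    exact lintegral_mono fun x => ENNReal.ofReal_le_ofReal (hgle k n x hn)
  -- rewrite the left-hand side via monotone convergence
  have hlim : ∀ x, liminf (fun n => ENNReal.ofReal (F n x)) atTop =
      ⨆ k, ENNReal.ofReal (g k x) := by
    intro x
    rw [liminf_eq_iSup_iInf_of_nat']
    congr 1
    funext k
    rw [hg, ENNReal.ofReal_iInf]
  calc ∫⁻ x, liminf (fun n => ENNReal.ofReal (f n x - C)) atTop ∂μ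
      = ∫⁻ x, ⨆ k, ENNReal.ofReal (g k x) ∂μ := by
        exact lintegral_congr fun x => hlim x
    _ = ⨆ k, ∫⁻ x, ENNReal.ofReal (g k x) ∂μ := by
        refine lintegral_iSup (fun k => ((hgcont k).measurable).ennreal_ofReal) ?_
        intro k l hkl x
        exact ENNReal.ofReal_le_ofReal (hgmono x hkl)
    _ ≤ atTop.liminf fun n => ∫⁻ x, ENNReal.ofReal (F n x) ∂(μs n) := iSup_le hkey
end
end

section
/- Let σₙ, σ_∞ be finite signed Borel measures on H with supₙ |σₙ|(H) < ∞, ∫φ dσₙ → ∫φ dσ_∞ for all φ ∈ C_b(H), uniformly small mass outside a sequence of compact sets (supₙ |σₙ|(H∖J_m) → 0 as m→∞), and let φₙ, φ_∞ be equi-bounded, equi-continuous functions with φₙ → φ_∞ pointwise on the support of σ_∞. Then ∫ φₙ dσₙ → ∫ φ_∞ dσ_∞. -/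
open MeasureTheory ENNReal Filter Topology Pointwise
open scoped Classical

noncomputable section

variable {H : Type*} [NormedAddCommGroup H] [InnerProductSpace ℝ H]
  [CompleteSpace H] [SecondCountableTopology H] [MeasurableSpace H] [BorelSpace H]

/-- Integral of a function against a finite signed measure, via the Jordan
decomposition. -/
noncomputable def sint (σ : SignedMeasure H) (φ : H → ℝ) : ℝ :=
  ∫ x, φ x ∂σ.toJordanDecomposition.posPart - ∫ x, φ x ∂σ.toJordanDecomposition.negPart

/-- The (topological) support of a finite signed measure, via its total variation. -/
def ssupport (σ : SignedMeasure H) : Set H :=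
  {x | ∀ U : Set H, IsOpen U → x ∈ U → 0 < σ.totalVariation U}

open scoped BoundedContinuousFunction
set_option linter.unusedSectionVars false

lemma myIntegrable (μ : Measure H) [IsFiniteMeasure μ] {g : H → ℝ} (hg : Continuous g)
    {B : ℝ} (hB : ∀ x, |g x| ≤ B) : Integrable g μ :=
  (integrable_const B).mono' hg.aestronglyMeasurable
    (Filter.Eventually.of_forall (fun x => by simpa using hB x))

lemma myIntBound (μ : Measure H) [IsFiniteMeasure μ] {g : H → ℝ} (hg : Continuous g)
    {B δ : ℝ} (hB : ∀ x, |g x| ≤ B) {K : Set H} (hK : MeasurableSet K)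
    (hδ : ∀ x ∈ K, |g x| ≤ δ) :
    ∫ x, |g x| ∂μ ≤ δ * (μ K).toReal + B * (μ Kᶜ).toReal := by
  have hint : Integrable (fun x => |g x|) μ := (myIntegrable μ hg hB).abs
  rw [← integral_add_compl hK hint]
  have h1 : ∫ x in K, |g x| ∂μ ≤ δ * (μ K).toReal := by
    have := norm_setIntegral_le_of_norm_le_const (μ := μ) (s := K) (f := fun x => |g x|)
      (measure_lt_top μ K) (fun x hx => by simpa using hδ x hx)
    exact (le_abs_self _).trans (by simpa [Real.norm_eq_abs, measureReal_def] using this)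
  have h2 : ∫ x in Kᶜ, |g x| ∂μ ≤ B * (μ Kᶜ).toReal := by
    have := norm_setIntegral_le_of_norm_le_const (μ := μ) (s := Kᶜ) (f := fun x => |g x|)
      (measure_lt_top μ Kᶜ) (fun x _ => by simpa using hB x)
    exact (le_abs_self _).trans (by simpa [Real.norm_eq_abs, measureReal_def] using this)
  exact add_le_add h1 h2

lemma sint_bound (σ : SignedMeasure H) {g : H → ℝ} (hg : Continuous g) {B δ : ℝ}
    (hB : ∀ x, |g x| ≤ B) {K : Set H} (hK : MeasurableSet K)
    (hδ : ∀ x ∈ K, |g x| ≤ δ) (hδ0 : 0 ≤ δ) :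
    |sint σ g| ≤ δ * (σ.totalVariation Set.univ).toReal + B * (σ.totalVariation Kᶜ).toReal := by
  set μp := σ.toJordanDecomposition.posPart
  set μn := σ.toJordanDecomposition.negPart
  have habs : ∀ (μ : Measure H) [IsFiniteMeasure μ], |∫ x, g x ∂μ| ≤ ∫ x, |g x| ∂μ := by
    intro μ _
    simpa [Real.norm_eq_abs] using norm_integral_le_integral_norm (μ := μ) g
  have h1 : |sint σ g| ≤ ∫ x, |g x| ∂μp + ∫ x, |g x| ∂μn :=
    (abs_sub _ _).trans (add_le_add (habs μp) (habs μn))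
  have h2 := myIntBound μp hg hB hK hδ
  have h3 := myIntBound μn hg hB hK hδ
  have htv : ∀ A : Set H, (σ.totalVariation A).toReal = (μp A).toReal + (μn A).toReal := by
    intro A
    rw [SignedMeasure.totalVariation, Measure.add_apply, ENNReal.toReal_add
      (measure_ne_top _ _) (measure_ne_top _ _)]
  have hKuniv : δ * (μp K).toReal + δ * (μn K).toReal
      ≤ δ * (σ.totalVariation Set.univ).toReal := by
    rw [htv Set.univ]
    have hp : (μp K).toReal ≤ (μp Set.univ).toReal :=
      ENNReal.toReal_mono (measure_ne_top _ _) (measure_mono (Set.subset_univ _))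
    have hn : (μn K).toReal ≤ (μn Set.univ).toReal :=
      ENNReal.toReal_mono (measure_ne_top _ _) (measure_mono (Set.subset_univ _))
    nlinarith
  calc |sint σ g| ≤ ∫ x, |g x| ∂μp + ∫ x, |g x| ∂μn := h1
    _ ≤ (δ * (μp K).toReal + B * (μp Kᶜ).toReal)
        + (δ * (μn K).toReal + B * (μn Kᶜ).toReal) := add_le_add h2 h3
    _ ≤ δ * (σ.totalVariation Set.univ).toReal + B * (σ.totalVariation Kᶜ).toReal := by
        rw [htv Kᶜ]; nlinarith [hKuniv]

lemma sint_sub (σ : SignedMeasure H) {f g : H → ℝ} (hf : Continuous f) {Bf : ℝ}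
    (hBf : ∀ x, |f x| ≤ Bf) (hg : Continuous g) {Bg : ℝ} (hBg : ∀ x, |g x| ≤ Bg) :
    sint σ (fun x => f x - g x) = sint σ f - sint σ g := by
  unfold sint
  rw [integral_sub (myIntegrable _ hf hBf) (myIntegrable _ hg hBg),
    integral_sub (myIntegrable _ hf hBf) (myIntegrable _ hg hBg)]
  ring

lemma ssupport_compl_eq (σ : SignedMeasure H) :
    (ssupport σ)ᶜ = ⋃₀ {U : Set H | IsOpen U ∧ σ.totalVariation U = 0} := by
  ext x
  simp only [Set.mem_compl_iff, ssupport, Set.mem_setOf_eq, Set.mem_sUnion, not_forall]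
  constructor
  · rintro ⟨U, hU, hxU, hpos⟩
    exact ⟨U, ⟨hU, by simpa [pos_iff_ne_zero] using hpos⟩, hxU⟩
  · rintro ⟨U, ⟨hU, hU0⟩, hxU⟩
    exact ⟨U, hU, hxU, by simp [hU0]⟩

lemma isClosed_ssupport (σ : SignedMeasure H) : IsClosed (ssupport σ) := by
  rw [← isOpen_compl_iff, ssupport_compl_eq]
  exact isOpen_sUnion (fun U hU => hU.1)

lemma tv_ssupport_compl (σ : SignedMeasure H) : σ.totalVariation (ssupport σ)ᶜ = 0 := by
  rw [ssupport_compl_eq]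
  obtain ⟨T, hTc, hTsub, hTeq⟩ :=
    TopologicalSpace.isOpen_sUnion_countable {U : Set H | IsOpen U ∧ σ.totalVariation U = 0}
      (fun U hU => hU.1)
  rw [← hTeq]
  exact (measure_sUnion_null_iff hTc).2 (fun U hU => (hTsub hU).2)

lemma exists_compact_tail (μ : Measure H) [IsFiniteMeasure μ] {ε : ℝ≥0∞} (hε : ε ≠ 0) :
    ∃ K : Set H, IsCompact K ∧ μ Kᶜ ≤ ε := by
  obtain ⟨δ, hδpos, hδsum⟩ := ENNReal.exists_pos_sum_of_countable' hε ℕ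
  obtain ⟨u, hu⟩ := TopologicalSpace.exists_dense_seq H
  have hball : ∀ k : ℕ, ∃ N : ℕ, μ (⋃ i ≤ N, Metric.closedBall (u i) (1 / (k + 1)))ᶜ ≤ δ k := by
    intro k
    set B : ℕ → Set H := fun N => (⋃ i ≤ N, Metric.closedBall (u i) (1 / (k + 1)))ᶜ with hB
    have hmeas : ∀ N, NullMeasurableSet (B N) μ := by
      intro N
      refine (MeasurableSet.compl ?_).nullMeasurableSet
      exact MeasurableSet.biUnion (Set.to_countable _) (fun i _ => measurableSet_closedBall)
    have hanti : Antitone B := by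
      intro a b hab
      exact Set.compl_subset_compl.2
        (Set.biUnion_subset_biUnion_left (fun i hi => le_trans hi hab))
    have hcover : (⋃ N, ⋃ i, ⋃ (_ : i ≤ N), Metric.closedBall (u i) (1 / (k + 1)))
        = Set.univ := by
      ext x
      simp only [Set.mem_univ, iff_true, Set.mem_iUnion]
      obtain ⟨i, hi⟩ := Metric.denseRange_iff.1 hu x (1 / (k + 1)) (by positivity)
      exact ⟨i, i, le_refl i, by simpa [Metric.mem_closedBall] using hi.le⟩
    have hinter : ⋂ N, B N = ∅ := by
      simp only [hB, ← Set.compl_iUnion, hcover, Set.compl_univ]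
    have htend := tendsto_measure_iInter_atTop hmeas hanti ⟨0, measure_ne_top μ _⟩
    rw [hinter, measure_empty] at htend
    obtain ⟨N, hN⟩ := ((tendsto_order.1 htend).2 (δ k) (hδpos k)).exists
    exact ⟨N, hN.le⟩
  choose N hN using hball
  set A : ℕ → Set H := fun k => ⋃ i ≤ N k, Metric.closedBall (u i) (1 / (k + 1)) with hA
  refine ⟨⋂ k, A k, ?_, ?_⟩
  · refine TotallyBounded.isCompact_of_isClosed ?_ ?_
    · rw [Metric.totallyBounded_iff]
      intro ε' hε'
      obtain ⟨k, hk⟩ := exists_nat_one_div_lt hε'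
      refine ⟨u '' Set.Iic (N k), (Set.finite_Iic _).image u, ?_⟩
      intro x hx
      have hx' : x ∈ A k := Set.mem_iInter.1 hx k
      simp only [hA, Set.mem_iUnion] at hx'
      obtain ⟨i, hi, hxi⟩ := hx'
      refine Set.mem_biUnion (Set.mem_image_of_mem u hi) ?_
      exact Metric.mem_ball.2 (lt_of_le_of_lt (Metric.mem_closedBall.1 hxi) hk)
    · refine isClosed_iInter (fun k => ?_)
      exact (Set.finite_Iic (N k)).isClosed_biUnion (fun i _ => Metric.isClosed_closedBall)
  · rw [Set.compl_iInter]
    calc μ (⋃ k, (A k)ᶜ) ≤ ∑' k, μ (A k)ᶜ := measure_iUnion_le _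
      _ ≤ ∑' k, δ k := ENNReal.tsum_le_tsum (fun k => hN k)
      _ ≤ ε := hδsum.le


set_option maxHeartbeats 1000000 in
/-- Convergence of integrals of varying functions against varying finite signed
measures: under uniform total-variation bounds, weak convergence, uniform tightness,
equi-boundedness and equi-continuity of the functions, and pointwise convergence on
the support of the limit measure, `∫ φₙ dσₙ → ∫ φ_∞ dσ_∞`. -/
theorem signedMeasure_integral_convergence
    (σs : ℕ → SignedMeasure H) (σ' : SignedMeasure H)
    (hbd : ∃ M : ℝ≥0∞, M < ⊤ ∧ ∀ n, (σs n).totalVariation Set.univ ≤ M)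
    (hconv : ∀ φ : BoundedContinuousFunction H ℝ,
      Tendsto (fun n => sint (σs n) φ) atTop (𝓝 (sint σ' φ)))
    (J : ℕ → Set H) (hJc : ∀ m, IsCompact (J m))
    (hJ : Tendsto (fun m => ⨆ n, (σs n).totalVariation (J m)ᶜ) atTop (𝓝 0))
    (φs : ℕ → H → ℝ) (φ' : H → ℝ)
    (hφbd : ∃ C : ℝ, (∀ n x, |φs n x| ≤ C) ∧ ∀ x, |φ' x| ≤ C)
    (hφec : Equicontinuous (fun o : Option ℕ => Option.elim o φ' φs))
    (hφpt : ∀ x ∈ ssupport σ', Tendsto (fun n => φs n x) atTop (𝓝 (φ' x))) :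
    Tendsto (fun n => sint (σs n) (φs n)) atTop (𝓝 (sint σ' φ')) := by
  obtain ⟨M, hMlt, hM⟩ := hbd
  obtain ⟨C, hCb, hCb'⟩ := hφbd
  have hC0 : (0:ℝ) ≤ C := (abs_nonneg _).trans (hCb' 0)
  have hφcont : ∀ n, Continuous (φs n) := fun n => hφec.continuous (some n)
  have hφ'cont : Continuous φ' := hφec.continuous none
  haveI : IsFiniteMeasure (σ'.totalVariation) := by
    unfold SignedMeasure.totalVariation; infer_instance
  by_contra hcon
  rw [Metric.tendsto_atTop] at hcon
  push_neg at hcon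
  obtain ⟨ε₀, hε₀pos, hfr⟩ := hcon
  obtain ⟨k, hkmono, hk⟩ :=
    Filter.extraction_of_frequently_atTop (Filter.frequently_atTop.2 hfr)
  set Mr : ℝ := M.toReal with hMr
  have hMr0 : 0 ≤ Mr := ENNReal.toReal_nonneg
  set dd : ℝ := Mr + 4*C + 2 with hdd
  have hddpos : 0 < dd := by positivity
  set ε : ℝ := ε₀ / (2 * dd) with hε
  have hεpos : 0 < ε := by positivity
  have hεd : ε * dd = ε₀ / 2 := by
    rw [hε]; field_simp
  -- choose the compact set K
  obtain ⟨m, hm⟩ :=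
    ((ENNReal.tendsto_nhds_zero.1 hJ) (ENNReal.ofReal ε) (ENNReal.ofReal_pos.2 hεpos)).exists
  have hmn : ∀ n, (σs n).totalVariation (J m)ᶜ ≤ ENNReal.ofReal ε :=
    fun n => le_trans (le_iSup (fun n => (σs n).totalVariation (J m)ᶜ) n) hm
  obtain ⟨K', hK'c, hK'⟩ := exists_compact_tail σ'.totalVariation
    (ε := ENNReal.ofReal ε) (ENNReal.ofReal_pos.2 hεpos).ne'
  set K : Set H := J m ∪ K' with hKdef
  have hKc : IsCompact K := (hJc m).union hK'c
  have hKcl : IsClosed K := hKc.isClosed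
  have hKmeas : MeasurableSet K := hKcl.measurableSet
  haveI : CompactSpace ↥K := isCompact_iff_compactSpace.1 hKc
  have hσnK : ∀ n, (σs n).totalVariation Kᶜ ≤ ENNReal.ofReal ε := fun n =>
    le_trans (measure_mono (Set.compl_subset_compl.2 Set.subset_union_left)) (hmn n)
  have hσ'K : σ'.totalVariation Kᶜ ≤ ENNReal.ofReal ε :=
    le_trans (measure_mono (Set.compl_subset_compl.2 Set.subset_union_right)) hK'
  -- toReal versions
  have htoR : ∀ {a : ℝ≥0∞}, a ≤ ENNReal.ofReal ε → a.toReal ≤ ε := by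
    intro a ha
    exact le_trans (ENNReal.toReal_mono ENNReal.ofReal_ne_top ha)
      (ENNReal.toReal_ofReal hεpos.le).le
  have hMrbd : ∀ n, ((σs n).totalVariation Set.univ).toReal ≤ Mr :=
    fun n => ENNReal.toReal_mono hMlt.ne (hM n)
  -- the restricted bounded continuous functions
  let F : ℕ → (↥K →ᵇ ℝ) := fun n =>
    (BoundedContinuousFunction.ofNormedAddCommGroup (φs (k n)) (hφcont _) C
      (fun x => by simpa [Real.norm_eq_abs] using hCb (k n) x)).restrict K
  have hFapp : ∀ n (x : ↥K), F n x = φs (k n) (x : H) := fun n x => rfl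
  set A : Set (↥K →ᵇ ℝ) := Set.range F with hA
  have hecA : Equicontinuous ((↑) : A → ↥K → ℝ) := by
    intro x₀
    rw [Metric.equicontinuousAt_iff]
    intro ε' hε'
    obtain ⟨δ, hδpos, hδ⟩ := Metric.equicontinuousAt_iff.1 (hφec (x₀ : H)) ε' hε'
    refine ⟨δ, hδpos, fun x hx f => ?_⟩
    obtain ⟨n, hn⟩ := f.2
    have h2 := hδ (x : H) (by simpa [Subtype.dist_eq] using hx) (some (k n))
    calc dist ((f : ↥K →ᵇ ℝ) x₀) ((f : ↥K →ᵇ ℝ) x)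
        = dist (F n x₀) (F n x) := by rw [hn]
      _ < ε' := h2
  have hAcp : IsCompact (closure A) := by
    refine BoundedContinuousFunction.arzela_ascoli (Set.Icc (-C) C) isCompact_Icc A
      (fun f x hf => ?_) hecA
    obtain ⟨n, hn⟩ := hf
    rw [← hn]
    exact Set.mem_Icc.2 (abs_le.1 (by rw [hFapp]; exact hCb (k n) (x : H)))
  obtain ⟨ψ, hψmem, l, hlmono, hltend⟩ :=
    hAcp.tendsto_subseq (fun n => subset_closure (Set.mem_range_self (f := F) n))
  have hunif := BoundedContinuousFunction.tendsto_iff_tendstoUniformly.1 hltend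
  set j : ℕ → ℕ := fun n => k (l n) with hj
  have hjmono : StrictMono j := hkmono.comp hlmono
  have hjtend : Tendsto j atTop atTop := hjmono.tendsto_atTop
  have hψbd : ∀ x : ↥K, |ψ x| ≤ C := by
    intro x
    have hpt : Tendsto (fun n => (F (l n)) x) atTop (𝓝 (ψ x)) := hunif.tendsto_at x
    exact le_of_tendsto hpt.abs
      (Filter.Eventually.of_forall fun n => by rw [hFapp]; exact hCb (k (l n)) (x : H))
  obtain ⟨Ψ, hΨnorm, hΨres⟩ :=
    BoundedContinuousFunction.exists_norm_eq_restrict_eq_of_closed ψ hKcl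
  have hΨbd : ∀ x, |Ψ x| ≤ C := by
    intro x
    have h1 : |Ψ x| ≤ ‖Ψ‖ := by
      simpa [Real.norm_eq_abs] using Ψ.norm_coe_le_norm x
    rw [hΨnorm] at h1
    exact h1.trans ((BoundedContinuousFunction.norm_le hC0).2
      (fun y => by simpa [Real.norm_eq_abs] using hψbd y))
  have hΨK : ∀ (x : H) (hx : x ∈ K), Ψ x = ψ ⟨x, hx⟩ := by
    intro x hx
    have := DFunLike.congr_fun hΨres (⟨x, hx⟩ : ↥K)
    simpa using this
  -- Ψ agrees with φ' on the support within K
  have hΨS : ∀ x ∈ ssupport σ' ∩ K, Ψ x = φ' x := by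
    rintro x ⟨hxS, hxK⟩
    have hpt : Tendsto (fun n => (F (l n)) (⟨x, hxK⟩ : ↥K)) atTop (𝓝 (ψ ⟨x, hxK⟩)) :=
      hunif.tendsto_at _
    have hpt' : Tendsto (fun n => φs (j n) x) atTop (𝓝 (ψ ⟨x, hxK⟩)) := by
      refine hpt.congr (fun n => ?_)
      rw [hFapp]
    have hpt'' : Tendsto (fun n => φs (j n) x) atTop (𝓝 (φ' x)) :=
      (hφpt x hxS).comp hjtend
    rw [hΨK x hxK]
    exact tendsto_nhds_unique hpt' hpt''
  -- term 3 : |sint σ' Ψ - sint σ' φ'| ≤ (C + C) * ε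
  have hE3 : |sint σ' ⇑Ψ - sint σ' φ'| ≤ (C + C) * ε := by
    rw [← sint_sub σ' Ψ.continuous hΨbd hφ'cont hCb']
    have hSK : MeasurableSet (ssupport σ' ∩ K) :=
      ((isClosed_ssupport σ').inter hKcl).measurableSet
    have hz : ∀ x ∈ ssupport σ' ∩ K, |Ψ x - φ' x| ≤ 0 := by
      intro x hx
      rw [hΨS x hx]
      simp
    have hb3 : ∀ x, |Ψ x - φ' x| ≤ C + C :=
      fun x => (abs_sub _ _).trans (add_le_add (hΨbd x) (hCb' x))
    have := sint_bound σ' (Ψ.continuous.sub hφ'cont) hb3 hSK hz le_rfl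
    rw [zero_mul, zero_add] at this
    refine this.trans ?_
    have hcm : σ'.totalVariation (ssupport σ' ∩ K)ᶜ ≤ ENNReal.ofReal ε := by
      rw [Set.compl_inter]
      refine le_trans (measure_union_le _ _) ?_
      rw [tv_ssupport_compl σ', zero_add]
      exact hσ'K
    exact mul_le_mul_of_nonneg_left (htoR hcm) (by linarith)
  -- term 2 : eventually |sint (σs (j n)) Ψ - sint σ' Ψ| < ε
  have hE2 : ∀ᶠ n in atTop, dist (sint (σs (j n)) ⇑Ψ) (sint σ' ⇑Ψ) < ε :=
    Metric.tendsto_nhds.1 ((hconv Ψ).comp hjtend) ε hεpos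
  -- term 1 : eventually |sint (σs (j n)) (φs (j n)) - sint (σs (j n)) Ψ| ≤ ε*Mr + (C+C)*ε
  have hE1 : ∀ᶠ n in atTop,
      |sint (σs (j n)) (φs (j n)) - sint (σs (j n)) ⇑Ψ| ≤ ε * Mr + (C + C) * ε := by
    filter_upwards [Metric.tendstoUniformly_iff.1 hunif ε hεpos] with n hn
    rw [← sint_sub (σs (j n)) (hφcont (j n)) (hCb (j n)) Ψ.continuous hΨbd]
    have hb1 : ∀ x, |φs (j n) x - Ψ x| ≤ C + C :=
      fun x => (abs_sub _ _).trans (add_le_add (hCb (j n) x) (hΨbd x))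
    have hsm : ∀ x ∈ K, |φs (j n) x - Ψ x| ≤ ε := by
      intro x hx
      have := hn ⟨x, hx⟩
      rw [Real.dist_eq] at this
      rw [hΨK x hx]
      have heq : φs (j n) x = F (l n) ⟨x, hx⟩ := (hFapp (l n) ⟨x, hx⟩).symm
      rw [heq, abs_sub_comm]
      exact this.le
    have := sint_bound (σs (j n)) ((hφcont (j n)).sub Ψ.continuous) hb1 hKmeas hsm hεpos.le
    refine this.trans ?_
    refine add_le_add ?_ ?_
    · exact mul_le_mul_of_nonneg_left (hMrbd (j n)) hεpos.le
    · exact mul_le_mul_of_nonneg_left (htoR (hσnK (j n))) (by linarith)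
  obtain ⟨n, hn1, hn2⟩ := (hE1.and hE2).exists
  have hkn := hk (l n)
  rw [Real.dist_eq] at hkn hn2
  have htri : |sint (σs (j n)) (φs (j n)) - sint σ' φ'|
      ≤ |sint (σs (j n)) (φs (j n)) - sint (σs (j n)) ⇑Ψ|
        + |sint (σs (j n)) ⇑Ψ - sint σ' ⇑Ψ| + |sint σ' ⇑Ψ - sint σ' φ'| := by
    calc |sint (σs (j n)) (φs (j n)) - sint σ' φ'|
        = |(sint (σs (j n)) (φs (j n)) - sint (σs (j n)) ⇑Ψ)
            + (sint (σs (j n)) ⇑Ψ - sint σ' ⇑Ψ) + (sint σ' ⇑Ψ - sint σ' φ')| := by ring_nf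
      _ ≤ _ := by
          refine (abs_add_le _ _).trans (add_le_add ?_ le_rfl)
          exact abs_add_le _ _
  have hfinal : |sint (σs (j n)) (φs (j n)) - sint σ' φ'| < ε₀ := by
    have h1 := hn1
    have h2 := hn2.le
    have h3 := hE3
    have hsum : ε * Mr + (C + C) * ε + ε + (C + C) * ε + ε = ε₀ / 2 := by
      rw [← hεd, hdd]; ring
    nlinarith [htri, hεpos]
  exact absurd hkn (not_le.2 hfinal)
end
end
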